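/- For d odd and x ∈ [-1+2/d, 1], setting α = (d/(d-1))·√[(1/2)(1-1/d)(1-2/d+x)], β = √(1-α²), and U the block-diagonal unitary consisting of (d-1)/2 copies of the rotation [[α,β],[-β,α]] followed by a 1×1 block 1, one has (1/d)tr[UŪ] = x and (1/d)|tr U| = √[(1/2)(1-1/d)(1-2/d+x)] + 1/d. -/

import Mathlib

open Matrix Finset

private def Ent (d : ℕ) (α β : ℝ) (i j : ℕ) : ℝ :=
  if i = j ∧ i = d - 1 then 1
  else if i = j then α
  else if i + 1 = j ∧ i % 2 = 0 then β
  else if j + 1 = i ∧ j % 2 = 0 then -β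
  else 0

private lemma Ent_zero (d : ℕ) (α β : ℝ) {i k : ℕ} (h1 : i ≠ k)
    (h2 : ¬(i + 1 = k ∧ i % 2 = 0)) (h3 : ¬(k + 1 = i ∧ k % 2 = 0)) :
    Ent d α β i k = 0 := by
  unfold Ent; split_ifs <;> first | rfl | tauto

private lemma Ent_last (d : ℕ) (α β : ℝ) : Ent d α β (d-1) (d-1) = 1 := by
  unfold Ent; simp

private lemma Ent_diag (d : ℕ) (α β : ℝ) {i : ℕ} (h : i ≠ d - 1) :
    Ent d α β i i = α := by
  unfold Ent; split_ifs <;> first | rfl | omega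

private lemma Ent_right (d : ℕ) (α β : ℝ) {i : ℕ} (h : i % 2 = 0) :
    Ent d α β i (i+1) = β := by
  unfold Ent; split_ifs <;> first | rfl | omega

private lemma Ent_left (d : ℕ) (α β : ℝ) {i : ℕ} (h : i % 2 = 0) :
    Ent d α β (i+1) i = -β := by
  unfold Ent; split_ifs <;> first | rfl | omega

private lemma Ent_row (d : ℕ) (α β : ℝ) (hd1 : d % 2 = 1) (hab : α^2 + β^2 = 1)
    {i j : ℕ} (hi : i < d) (hj : j < d) :
    ∑ k ∈ Finset.range d, Ent d α β i k * Ent d α β j k = if i = j then 1 else 0 := by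
  by_cases hlast : i = d - 1
  · subst hlast
    rw [Finset.sum_eq_single_of_mem (d-1) (Finset.mem_range.mpr hi)
      (fun b hb hbne => by
        have hb' := Finset.mem_range.mp hb
        rw [Ent_zero d α β (by omega) (by omega) (by omega), zero_mul])]
    rw [Ent_last]
    by_cases hji : j = d - 1
    · subst hji; rw [Ent_last, if_pos rfl]; norm_num
    · rw [if_neg (by omega), Ent_zero d α β (by omega) (by omega) (by omega), mul_zero]
  · by_cases hpar : i % 2 = 0
    · -- i even, not last
      have hi1 : i + 1 < d := by omega
      have hsub : ({i, i+1} : Finset ℕ) ⊆ Finset.range d := by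
        intro k hk; simp only [Finset.mem_insert, Finset.mem_singleton] at hk
        rw [Finset.mem_range]; omega
      have hzero : ∀ k ∈ Finset.range d, k ∉ ({i, i+1} : Finset ℕ) →
          Ent d α β i k * Ent d α β j k = 0 := by
        intro k hk hk'
        simp only [Finset.mem_insert, Finset.mem_singleton] at hk'
        push_neg at hk'
        rw [Ent_zero d α β (by omega) (by omega) (by omega), zero_mul]
      rw [← Finset.sum_subset hsub hzero, Finset.sum_pair (by omega : i ≠ i + 1),
        Ent_diag d α β hlast, Ent_right d α β hpar]
      by_cases hji : j = i
      · subst hji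
        rw [if_pos rfl, Ent_diag d α β hlast, Ent_right d α β hpar]
        linear_combination hab
      · by_cases hji1 : j = i + 1
        · subst hji1
          rw [if_neg (by omega), Ent_left d α β hpar, Ent_diag d α β (by omega)]
          ring
        · rw [if_neg (by omega), Ent_zero d α β (by omega) (by omega) (by omega),
            Ent_zero d α β (by omega) (by omega) (by omega), mul_zero, mul_zero, add_zero]
    · -- i odd
      obtain ⟨m, rfl, hm2⟩ : ∃ m, i = m + 1 ∧ m % 2 = 0 := ⟨i - 1, by omega, by omega⟩
      have hsub : ({m, m+1} : Finset ℕ) ⊆ Finset.range d := by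
        intro k hk; simp only [Finset.mem_insert, Finset.mem_singleton] at hk
        rw [Finset.mem_range]; omega
      have hzero : ∀ k ∈ Finset.range d, k ∉ ({m, m+1} : Finset ℕ) →
          Ent d α β (m+1) k * Ent d α β j k = 0 := by
        intro k hk hk'
        simp only [Finset.mem_insert, Finset.mem_singleton] at hk'
        push_neg at hk'
        rw [Ent_zero d α β (by omega) (by omega) (by omega), zero_mul]
      rw [← Finset.sum_subset hsub hzero, Finset.sum_pair (by omega : m ≠ m + 1),
        Ent_left d α β hm2, Ent_diag d α β hlast]
      by_cases hjm : j = m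
      · subst hjm
        rw [if_neg (by omega), Ent_diag d α β (by omega), Ent_right d α β hm2]
        ring
      · by_cases hjm1 : j = m + 1
        · subst hjm1
          rw [if_pos rfl, Ent_left d α β hm2, Ent_diag d α β hlast]
          linear_combination hab
        · rw [if_neg (by omega), Ent_zero d α β (by omega) (by omega) (by omega),
            Ent_zero d α β (by omega) (by omega) (by omega), mul_zero, mul_zero, add_zero]

private lemma Ent_diagsq (d : ℕ) (α β : ℝ) (hd1 : d % 2 = 1) {i : ℕ} (hi : i < d) :
    ∑ k ∈ Finset.range d, Ent d α β i k * Ent d α β k i =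
      if i = d - 1 then 1 else α^2 - β^2 := by
  by_cases hlast : i = d - 1
  · subst hlast
    rw [Finset.sum_eq_single_of_mem (d-1) (Finset.mem_range.mpr hi)
      (fun b hb hbne => by
        have hb' := Finset.mem_range.mp hb
        rw [Ent_zero d α β (by omega) (by omega) (by omega), zero_mul])]
    rw [Ent_last, if_pos rfl]; norm_num
  · by_cases hpar : i % 2 = 0
    · have hi1 : i + 1 < d := by omega
      have hsub : ({i, i+1} : Finset ℕ) ⊆ Finset.range d := by
        intro k hk; simp only [Finset.mem_insert, Finset.mem_singleton] at hk
        rw [Finset.mem_range]; omega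
      have hzero : ∀ k ∈ Finset.range d, k ∉ ({i, i+1} : Finset ℕ) →
          Ent d α β i k * Ent d α β k i = 0 := by
        intro k hk hk'
        simp only [Finset.mem_insert, Finset.mem_singleton] at hk'
        push_neg at hk'
        rw [Ent_zero d α β (by omega) (by omega) (by omega), zero_mul]
      rw [← Finset.sum_subset hsub hzero, Finset.sum_pair (by omega : i ≠ i + 1),
        Ent_diag d α β hlast, Ent_right d α β hpar, Ent_left d α β hpar, if_neg hlast]
      ring
    · obtain ⟨m, rfl, hm2⟩ : ∃ m, i = m + 1 ∧ m % 2 = 0 := ⟨i - 1, by omega, by omega⟩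
      have hsub : ({m, m+1} : Finset ℕ) ⊆ Finset.range d := by
        intro k hk; simp only [Finset.mem_insert, Finset.mem_singleton] at hk
        rw [Finset.mem_range]; omega
      have hzero : ∀ k ∈ Finset.range d, k ∉ ({m, m+1} : Finset ℕ) →
          Ent d α β (m+1) k * Ent d α β k (m+1) = 0 := by
        intro k hk hk'
        simp only [Finset.mem_insert, Finset.mem_singleton] at hk'
        push_neg at hk'
        rw [Ent_zero d α β (by omega) (by omega) (by omega), zero_mul]
      rw [← Finset.sum_subset hsub hzero, Finset.sum_pair (by omega : m ≠ m + 1),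
        Ent_left d α β hm2, Ent_right d α β hm2, Ent_diag d α β hlast, if_neg hlast]
      ring

private lemma Ent_diag_ite (d : ℕ) (α β : ℝ) (i : ℕ) :
    Ent d α β i i = if i = d - 1 then 1 else α := by
  by_cases h : i = d - 1
  · subst h; rw [Ent_last, if_pos rfl]
  · rw [Ent_diag d α β h, if_neg h]

private lemma sum_iflast (d : ℕ) (hd : 1 ≤ d) (c : ℝ) :
    ∑ i ∈ Finset.range d, (if i = d - 1 then 1 else c) = (d - 1 : ℕ) * c + 1 := by
  obtain ⟨e, rfl⟩ : ∃ e, d = e + 1 := ⟨d - 1, by omega⟩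
  rw [Finset.range_add_one, Finset.sum_insert Finset.notMem_range_self]
  simp only [Nat.add_sub_cancel]
  rw [Finset.sum_congr rfl (fun y hy => if_neg (by have := Finset.mem_range.mp hy; omega)),
    Finset.sum_const, Finset.card_range, nsmul_eq_mul, if_pos trivial]
  ring


/-- the explicit block-diagonal maximizer: for odd `d ≥ 3` and
`x ∈ [-1+2/d, 1]`, with `α = (d/(d-1))·√[(1/2)(1-1/d)(1-2/d+x)]`, `β = √(1-α²)`, the
block-diagonal unitary consisting of `(d-1)/2` rotation blocks `[[α,β],[-β,α]]` and a final
`1 × 1` block `1` satisfies `α ∈ [0,1]`, is unitary, has `(1/d) tr[U Ū] = x` and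
`(1/d)|tr U| = √[(1/2)(1-1/d)(1-2/d+x)] + 1/d`. -/
theorem stmt_13 (d : ℕ) (hd : Odd d) (hd3 : 3 ≤ d) (x : ℝ)
    (hx : x ∈ Set.Icc (-1 + 2 / (d : ℝ)) 1)
    (α β : ℝ)
    (hα : α = ((d : ℝ) / (d - 1)) *
      Real.sqrt ((1 / 2) * (1 - 1 / (d : ℝ)) * (1 - 2 / (d : ℝ) + x)))
    (hβ : β = Real.sqrt (1 - α ^ 2))
    (U : Matrix (Fin d) (Fin d) ℂ)
    (hUdef : U = Matrix.of fun i j : Fin d =>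
      if (i : ℕ) = (j : ℕ) ∧ (i : ℕ) = d - 1 then 1
      else if (i : ℕ) = (j : ℕ) then (α : ℂ)
      else if (i : ℕ) + 1 = (j : ℕ) ∧ (i : ℕ) % 2 = 0 then (β : ℂ)
      else if (j : ℕ) + 1 = (i : ℕ) ∧ (j : ℕ) % 2 = 0 then -(β : ℂ)
      else 0) :
    α ∈ Set.Icc (0 : ℝ) 1 ∧
    U ∈ Matrix.unitaryGroup (Fin d) ℂ ∧
    (U * U.map (starRingEnd ℂ)).trace = (d : ℂ) * (x : ℂ) ∧
    ‖U.trace‖ / d =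
      Real.sqrt ((1 / 2) * (1 - 1 / (d : ℝ)) * (1 - 2 / (d : ℝ) + x)) + 1 / d := by
  have hd1 : d % 2 = 1 := Nat.odd_iff.mp hd
  have hdR : (3:ℝ) ≤ (d:ℝ) := by exact_mod_cast hd3
  have hd0 : (0:ℝ) < d := by linarith
  have hdm1 : (0:ℝ) < (d:ℝ) - 1 := by linarith
  have hdne : (d:ℝ) ≠ 0 := ne_of_gt hd0
  have hdm1ne : (d:ℝ) - 1 ≠ 0 := ne_of_gt hdm1
  have hcast : ((d - 1 : ℕ) : ℝ) = (d:ℝ) - 1 := by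
    rw [Nat.cast_sub (by omega)]; norm_num
  have hin : 0 ≤ (1/2) * (1 - 1/(d:ℝ)) * (1 - 2/(d:ℝ) + x) := by
    have h2 : 0 ≤ 1 - 2/(d:ℝ) + x := by have := hx.1; linarith
    have h3 : 0 ≤ 1 - 1/(d:ℝ) := by
      have : (1:ℝ)/d ≤ 1 := by rw [div_le_one hd0]; linarith
      linarith
    have := mul_nonneg (mul_nonneg (by norm_num : (0:ℝ) ≤ 1/2) h3) h2
    exact this
  set s : ℝ := Real.sqrt ((1/2) * (1 - 1/(d:ℝ)) * (1 - 2/(d:ℝ) + x)) with hs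
  have hs0 : 0 ≤ s := Real.sqrt_nonneg _
  have hs2 : s^2 = (1/2) * (1 - 1/(d:ℝ)) * (1 - 2/(d:ℝ) + x) := Real.sq_sqrt hin
  have hα0 : 0 ≤ α := by
    rw [hα]; exact mul_nonneg (by positivity) hs0
  have hα2' : α^2 = ((d:ℝ) - 2 + d * x) / (2 * ((d:ℝ) - 1)) := by
    rw [hα, mul_pow, hs2]; field_simp
  have hαsq : α^2 ≤ 1 := by
    rw [hα2', div_le_one (by linarith)]
    nlinarith [mul_le_mul_of_nonneg_left hx.2 hd0.le]
  have hα1 : α ≤ 1 := by nlinarith [hα0, hαsq]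
  have hα2 : 2 * ((d:ℝ) - 1) * α^2 = (d:ℝ) - 2 + d * x := by
    rw [hα2']; field_simp
  have hβ2 : β^2 = 1 - α^2 := by
    rw [hβ]; exact Real.sq_sqrt (by linarith)
  have hab : α^2 + β^2 = 1 := by linarith
  have hds : ((d:ℝ) - 1) * α = d * s := by
    rw [hα]; field_simp
  have hU : ∀ i j : Fin d, U i j = ((Ent d α β i j : ℝ) : ℂ) := by
    intro i j; rw [hUdef]; simp only [Matrix.of_apply]; unfold Ent
    split_ifs <;> push_cast <;> ring
  have key : ∀ i j : Fin d,
      ∑ k : Fin d, Ent d α β i k * Ent d α β j k = if (i:ℕ) = (j:ℕ) then 1 else 0 := by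
    intro i j
    rw [Fin.sum_univ_eq_sum_range (fun k => Ent d α β i k * Ent d α β j k) d]
    exact Ent_row d α β hd1 hab i.isLt j.isLt
  refine ⟨⟨hα0, hα1⟩, ?_, ?_, ?_⟩
  · -- unitary
    rw [Matrix.mem_unitaryGroup_iff]
    ext i j
    rw [Matrix.mul_apply, Matrix.one_apply]
    have hterm : ∀ k : Fin d, U i k * (star U) k j
        = ((Ent d α β i k * Ent d α β j k : ℝ) : ℂ) := by
      intro k
      rw [Matrix.star_apply, hU j k, Complex.star_def, Complex.conj_ofReal, hU i k,
        ← Complex.ofReal_mul]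
    rw [Finset.sum_congr rfl (fun k _ => hterm k), ← Complex.ofReal_sum, key i j]
    by_cases h : i = j
    · simp [h]
    · rw [if_neg h, if_neg (by simpa [Fin.val_inj] using h)]
      norm_num
  · -- trace of U Ū
    have hUreal : U.map (starRingEnd ℂ) = U := by
      ext i j
      rw [Matrix.map_apply, hU i j, Complex.conj_ofReal]
    rw [hUreal]
    have key2 : ∀ i : Fin d,
        ∑ k : Fin d, Ent d α β i k * Ent d α β k i
          = if (i:ℕ) = d - 1 then 1 else α^2 - β^2 := by
      intro i
      rw [Fin.sum_univ_eq_sum_range (fun k => Ent d α β i k * Ent d α β k i) d]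
      exact Ent_diagsq d α β hd1 i.isLt
    have t1 : (U * U).trace
        = ((∑ i : Fin d, if (i:ℕ) = d - 1 then (1:ℝ) else α^2 - β^2 : ℝ) : ℂ) := by
      rw [Matrix.trace, Complex.ofReal_sum]
      refine Finset.sum_congr rfl fun i _ => ?_
      rw [Matrix.diag_apply, Matrix.mul_apply, ← key2 i, Complex.ofReal_sum]
      exact Finset.sum_congr rfl fun k _ => by
        rw [hU i k, hU k i, Complex.ofReal_mul]
    rw [t1, Fin.sum_univ_eq_sum_range (fun n => if n = d - 1 then (1:ℝ) else α^2 - β^2) d,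
      sum_iflast d (by omega) (α^2 - β^2)]
    have treal : ((d - 1 : ℕ) : ℝ) * (α^2 - β^2) + 1 = d * x := by
      rw [hcast]; linear_combination hα2 - ((d:ℝ) - 1) * hβ2
    rw [treal]; push_cast; ring
  · -- abs trace
    have t2 : U.trace = ((((d - 1 : ℕ) : ℝ) * α + 1 : ℝ) : ℂ) := by
      rw [Matrix.trace, show ∑ i : Fin d, U.diag i
          = ((∑ i : Fin d, Ent d α β i i : ℝ) : ℂ) from by
        rw [Complex.ofReal_sum]
        exact Finset.sum_congr rfl fun i _ => by rw [Matrix.diag_apply, hU i i]]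
      rw [Fin.sum_univ_eq_sum_range (fun n => Ent d α β n n) d,
        Finset.sum_congr rfl (fun n _ => Ent_diag_ite d α β n), sum_iflast d (by omega) α]
    rw [t2, Complex.norm_real, Real.norm_eq_abs, abs_of_nonneg (by
      rw [hcast]; nlinarith [hα0, hdm1])]
    rw [hcast, hds]
    field_simp
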